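/- Let V₂ = V V' where V = Θ̃ Π Θ̃(I,I)^{-1} V(I,:) with Π a membership matrix, I a pure-node index tuple with Π(I,:) = I_K, Θ̃ diagonal with strictly positive diagonal, and every row of V nonzero. Then every row of V₂ is nonzero, and there exists Y₂ ∈ ℝ^{n×K} with all entries nonnegative and no zero row such that V_{*,2} = Y₂ V_{*,2}(I,:); explicitly Y₂ = N_{M₂} Π Θ̃(I,I)^{-1} N_{V₂}(I,I)^{-1} where N_{M₂} is diagonal with strictly positive diagonal entries N_{M₂}(i,i) = 1/‖(Π Θ̃(I,I)^{-1} V₂(I,:))(i,:)‖₂. Moreover, if Π(i,:) = Π(j,:) then V_{*,2}(i,:) = V_{*,2}(j,:). -/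
import Mathlib


open Matrix

/-- The Euclidean norm of a row vector. -/
noncomputable def rnorm {m : ℕ} (v : Fin m → ℝ) : ℝ := Real.sqrt (∑ j, v j ^ 2)

/-- Row-wise ℓ₂-normalization of a matrix. -/
noncomputable def rowNormalize {n m : ℕ} (V : Matrix (Fin n) (Fin m) ℝ) :
    Matrix (Fin n) (Fin m) ℝ :=
  Matrix.of fun i j => V i j / rnorm (V i)

lemma rnorm_nonneg' {m : ℕ} (v : Fin m → ℝ) : 0 ≤ rnorm v := Real.sqrt_nonneg _

lemma rnorm_pos' {m : ℕ} {v : Fin m → ℝ} (h : v ≠ 0) : 0 < rnorm v := by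
  obtain ⟨j, hj⟩ := Function.ne_iff.1 h
  exact Real.sqrt_pos.2 (Finset.sum_pos' (fun j _ => sq_nonneg _)
    ⟨j, Finset.mem_univ j, pow_two_pos_of_ne_zero hj⟩)

lemma rnorm_smul' {m : ℕ} {c : ℝ} (hc : 0 ≤ c) (v : Fin m → ℝ) :
    rnorm (fun j => c * v j) = c * rnorm v := by
  unfold rnorm
  rw [show ∑ j, (c * v j) ^ 2 = c ^ 2 * ∑ j, v j ^ 2 by
      rw [Finset.mul_sum]; exact Finset.sum_congr rfl fun j _ => by ring,
    Real.sqrt_mul (sq_nonneg c), Real.sqrt_sq hc]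

/-- **Ideal Cone for `V₂ = V V'`.** If `V = Θ̃ Π Θ̃(I,I)⁻¹ V(I,:)` with every
row of `V` nonzero, then every row of `V₂ = V V'` is nonzero, the explicit nonnegative matrix
`Y₂ = N_{M₂} Π Θ̃(I,I)⁻¹ N_{V₂}(I,I)⁻¹` has no zero row and satisfies
`V₂₊ = Y₂ V₂₊(I,:)`; moreover `Π(i,:) = Π(j,:)` implies `V₂₊(i,:) = V₂₊(j,:)`. -/
theorem ideal_cone_structure_V2 {n K : ℕ} (hK : 1 ≤ K) (hKn : K ≤ n)
    (Pim : Matrix (Fin n) (Fin K) ℝ)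
    (hnonneg : ∀ i k, 0 ≤ Pim i k)
    (hrowsum : ∀ i, ∑ k, Pim i k = 1)
    (I : Fin K → Fin n)
    (hpure : ∀ k l, Pim (I k) l = if l = k then (1 : ℝ) else 0)
    (θ : Fin n → ℝ) (hθ : ∀ i, 0 < θ i)
    (V : Matrix (Fin n) (Fin K) ℝ)
    (hVdef : V = Matrix.diagonal θ * Pim *
      (Matrix.diagonal (fun k => (θ (I k))⁻¹) * V.submatrix I id))
    (hrows : ∀ i, V i ≠ 0) :
    let V2 := V * Vᵀ
    (∀ i, V2 i ≠ 0) ∧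
    (let M2 := Pim * Matrix.diagonal (fun k => (θ (I k))⁻¹) * V2.submatrix I id
     let Y2 := Matrix.diagonal (fun i => (rnorm (M2 i))⁻¹) * Pim *
       Matrix.diagonal (fun k => (θ (I k))⁻¹) *
       Matrix.diagonal (fun k => rnorm (V2 (I k)))
     (∀ i, 0 < (rnorm (M2 i))⁻¹) ∧
     (∀ i k, 0 ≤ Y2 i k) ∧ (∀ i, Y2 i ≠ 0) ∧
       rowNormalize V2 = Y2 * (rowNormalize V2).submatrix I id) ∧
    (∀ i j, Pim i = Pim j → rowNormalize V2 i = rowNormalize V2 j) := by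
  intro V2
  have hV2 : V2 = V * Vᵀ := rfl
  set D : Matrix (Fin K) (Fin K) ℝ := Matrix.diagonal (fun k => (θ (I k))⁻¹) with hD
  set M : Matrix (Fin n) (Fin n) ℝ := Pim * D * V2.submatrix I id with hM
  -- every row of V2 is nonzero
  have hV2ne : ∀ i, V2 i ≠ 0 := by
    intro i h
    have h1 : V2 i i = ∑ k, V i k ^ 2 := by
      rw [hV2]; simp [Matrix.mul_apply, sq]
    obtain ⟨k, hk⟩ := Function.ne_iff.1 (hrows i)
    have h2 : 0 < ∑ k, V i k ^ 2 :=
      Finset.sum_pos' (fun j _ => sq_nonneg _)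
        ⟨k, Finset.mem_univ k, pow_two_pos_of_ne_zero hk⟩
    rw [h] at h1
    simp at h1
    exact h2.ne' h1.symm
  -- key matrix identity : diagonal θ * M = V2
  have hsub : V2.submatrix I id = V.submatrix I id * Vᵀ := by
    ext i j
    simp [hV2, Matrix.mul_apply]
  have hdM : Matrix.diagonal θ * M = V2 := by
    have hassoc : Matrix.diagonal θ * (Pim * D * (V.submatrix I id * Vᵀ))
        = (Matrix.diagonal θ * Pim * (D * V.submatrix I id)) * Vᵀ := by
      simp only [Matrix.mul_assoc]
    rw [hM, hsub, hassoc, ← hVdef, hV2]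
  have key : ∀ i j, V2 i j = θ i * M i j := by
    intro i j
    rw [← hdM]
    simp [Matrix.diagonal_mul]
  have hMne : ∀ i, M i ≠ 0 := by
    intro i h
    apply hV2ne i
    funext j
    rw [key i j]
    simp [h]
  have hnorm : ∀ i, rnorm (V2 i) = θ i * rnorm (M i) := by
    intro i
    have : V2 i = fun j => θ i * M i j := funext (key i)
    rw [this, rnorm_smul' (hθ i).le]
  have hRN : ∀ i j, rowNormalize V2 i j = M i j / rnorm (M i) := by
    intro i j
    show V2 i j / rnorm (V2 i) = _
    rw [key i j, hnorm i, mul_div_mul_left _ _ (hθ i).ne']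
  have hMapply : ∀ i j, M i j = ∑ k, Pim i k * ((θ (I k))⁻¹ * V2 (I k) j) := by
    intro i j
    rw [hM, hD]
    simp [Matrix.mul_apply, Matrix.diagonal_apply, ite_mul, zero_mul,
      Finset.sum_ite_eq, Finset.sum_ite_eq', mul_assoc]
  refine ⟨hV2ne, ?_, ?_⟩
  · intro M2 Y2
    have hM2 : M2 = M := rfl
    have hY2 : ∀ i k, Y2 i k
        = (rnorm (M i))⁻¹ * Pim i k * (θ (I k))⁻¹ * rnorm (V2 (I k)) := by
      intro i k
      show ((Matrix.diagonal (fun i => (rnorm (M2 i))⁻¹) * Pim * D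
          * Matrix.diagonal (fun k => rnorm (V2 (I k)))) : Matrix (Fin n) (Fin K) ℝ) i k = _
      rw [hM2, hD]
      simp [Matrix.mul_diagonal, Matrix.diagonal_mul]
    have hMpos : ∀ i, 0 < rnorm (M i) := fun i => rnorm_pos' (hMne i)
    refine ⟨fun i => inv_pos.2 (hM2 ▸ hMpos i), ?_, ?_, ?_⟩
    · intro i k
      rw [hY2]
      have := hnonneg i k
      have h1 := (hMpos i).le
      have h2 := rnorm_nonneg' (V2 (I k))
      have h3 := (hθ (I k)).le
      positivity
    · intro i h
      obtain ⟨k, hk⟩ : ∃ k, Pim i k ≠ 0 := by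
        by_contra hc
        push_neg at hc
        have := hrowsum i
        simp [hc] at this
      have hkpos : 0 < Pim i k := lt_of_le_of_ne (hnonneg i k) (Ne.symm hk)
      have : Y2 i k = 0 := by rw [h]; rfl
      rw [hY2] at this
      have hpos : 0 < (rnorm (M i))⁻¹ * Pim i k * (θ (I k))⁻¹ * rnorm (V2 (I k)) := by
        have := hMpos i
        have := hθ (I k)
        have := rnorm_pos' (hV2ne (I k))
        positivity
      exact hpos.ne' this
    · ext i j
      rw [Matrix.mul_apply, hRN]
      have hterm : ∀ k, Y2 i k * (rowNormalize V2).submatrix I id k j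
          = (rnorm (M i))⁻¹ * (Pim i k * ((θ (I k))⁻¹ * V2 (I k) j)) := by
        intro k
        have hVk : rnorm (V2 (I k)) ≠ 0 := (rnorm_pos' (hV2ne (I k))).ne'
        rw [hY2]
        show _ * (rowNormalize V2 (I k) j) = _
        show _ * (V2 (I k) j / rnorm (V2 (I k))) = _
        rw [mul_assoc, mul_div_assoc', mul_div_cancel_left₀ _ hVk]
        ring
      rw [Finset.sum_congr rfl fun k _ => hterm k, ← Finset.mul_sum, ← hMapply,
        div_eq_inv_mul]
  · intro i j hij
    have hMeq : M i = M j := by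
      funext l
      rw [hMapply, hMapply]
      simp only [hij]
    funext l
    rw [hRN, hRN, hMeq]
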